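/- For the mean field XY model, if β ≤ 2 then the equation ρ = R(ρ), with R(ρ) = (∫_{-1}^1 u(1-u²)^{-1/2} e^{βuρ} du)/(∫_{-1}^1 (1-u²)^{-1/2} e^{βuρ} du), has ρ = 0 as its unique solution. -/

import Mathlib

open MeasureTheory Real

/-- Mean of `U` under the measure on `[-1,1]` tilted by `e^{βuρ}` against `(1-u²)^{-1/2}du`. -/
noncomputable def Rf (β ρ : ℝ) : ℝ :=
  (∫ u in (-1:ℝ)..1, u * (1 - u ^ 2) ^ (-(1:ℝ)/2) * Real.exp (β * u * ρ)) /
  (∫ u in (-1:ℝ)..1, (1 - u ^ 2) ^ (-(1:ℝ)/2) * Real.exp (β * u * ρ))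


section XYaux
open Set intervalIntegral

theorem wInt01 : IntervalIntegrable (fun u : ℝ => (Real.sqrt (1 - u^2))⁻¹) volume 0 1 := by
  have hbig : IntervalIntegrable (fun u : ℝ => (1 - u) ^ (-(1:ℝ)/2)) volume 0 1 := by
    have := (intervalIntegrable_rpow' (a := 0) (b := 1) (r := -(1:ℝ)/2) (by norm_num)).comp_sub_left 1
    simpa using this.symm
  apply hbig.mono_fun
  · apply Measurable.aestronglyMeasurable
    exact ((measurable_const.sub (measurable_id.pow_const 2)).sqrt).inv
  · rw [Filter.EventuallyLE, ae_restrict_iff' measurableSet_uIoc]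
    filter_upwards with u hu
    rw [Set.uIoc_of_le (by norm_num : (0:ℝ) ≤ 1)] at hu
    obtain ⟨h0, h1⟩ := hu
    rcases eq_or_lt_of_le h1 with h1e | h1l
    · subst h1e; norm_num [Real.zero_rpow]
    have h1u : (0:ℝ) < 1 - u := by linarith
    have he : (1 - u) ^ (-(1:ℝ)/2) = (Real.sqrt (1-u))⁻¹ := by
      rw [show -(1:ℝ)/2 = -(1/2) by ring, Real.rpow_neg h1u.le, ← Real.sqrt_eq_rpow]
    rw [Real.norm_eq_abs, Real.norm_eq_abs, he]
    have hs : Real.sqrt (1 - u) ≤ Real.sqrt (1 - u^2) := by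
      apply Real.sqrt_le_sqrt; nlinarith
    rw [abs_of_nonneg (by positivity), abs_of_nonneg (by positivity)]
    exact inv_anti₀ (by positivity) hs




theorem wInt : IntervalIntegrable (fun u : ℝ => (Real.sqrt (1 - u^2))⁻¹) volume (-1) 1 := by
  have h2 := wInt01.comp_mul_left (c := -1)
  norm_num at h2
  have h2' : IntervalIntegrable (fun u : ℝ => (Real.sqrt (1 - u^2))⁻¹) volume (-1) 0 := by
    apply h2.symm.congr
    intro u _
    norm_num
  exact h2'.trans wInt01

theorem wExpInt (c : ℝ) :
    IntervalIntegrable (fun u : ℝ => (Real.sqrt (1 - u^2))⁻¹ * Real.exp (c * u)) volume (-1) 1 :=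
  wInt.mul_continuousOn (Continuous.continuousOn (by continuity))

theorem uwExpInt (c : ℝ) :
    IntervalIntegrable (fun u : ℝ => u * (Real.sqrt (1 - u^2))⁻¹ * Real.exp (c * u)) volume (-1) 1 := by
  have h := wInt.mul_continuousOn (g := fun u => u * Real.exp (c * u)) (Continuous.continuousOn (by continuity))
  apply h.congr
  intro u _
  dsimp only
  ring

theorem wIntegral : ∫ u in (-1:ℝ)..1, (Real.sqrt (1 - u^2))⁻¹ = π := by
  have h := integral_eq_sub_of_hasDeriv_right_of_le (f := Real.arcsin)
    (f' := fun u => (Real.sqrt (1 - u^2))⁻¹) (by norm_num : (-1:ℝ) ≤ 1)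
    (Real.continuous_arcsin.continuousOn) ?_ wInt
  · rw [h, Real.arcsin_one, Real.arcsin_neg_one]; ring
  · intro x hx
    have := Real.hasDerivAt_arcsin (ne_of_gt hx.1) (ne_of_lt hx.2)
    rw [show (Real.sqrt (1 - x^2))⁻¹ = 1 / Real.sqrt (1 - x^2) by rw [one_div]]
    exact this.hasDerivWithinAt

theorem parts (c : ℝ) :
    ∫ u in (-1:ℝ)..1, u * (Real.sqrt (1 - u^2))⁻¹ * Real.exp (c * u)
      = c * ∫ u in (-1:ℝ)..1, Real.sqrt (1 - u^2) * Real.exp (c * u) := by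
  set F : ℝ → ℝ := fun u => -(Real.sqrt (1 - u^2) * Real.exp (c * u)) with hF
  have hint : IntervalIntegrable
      (fun u : ℝ => u * (Real.sqrt (1 - u^2))⁻¹ * Real.exp (c * u)
        - c * (Real.sqrt (1 - u^2) * Real.exp (c * u))) volume (-1) 1 := by
    apply (uwExpInt c).sub
    apply Continuous.intervalIntegrable
    continuity
  have key := integral_eq_sub_of_hasDeriv_right_of_le (f := F)
    (f' := fun u => u * (Real.sqrt (1 - u^2))⁻¹ * Real.exp (c * u)
        - c * (Real.sqrt (1 - u^2) * Real.exp (c * u)))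
    (by norm_num : (-1:ℝ) ≤ 1)
    (Continuous.continuousOn (by continuity)) ?_ hint
  · have h0 : F 1 - F (-1) = 0 := by simp [hF]
    rw [h0] at key
    have hsub := intervalIntegral.integral_sub (uwExpInt c)
      ((Continuous.intervalIntegrable (by continuity) _ _) :
        IntervalIntegrable (fun u : ℝ => c * (Real.sqrt (1 - u^2) * Real.exp (c * u))) volume (-1) 1)
    rw [hsub] at key
    rw [intervalIntegral.integral_const_mul] at key
    linarith [key]
  · intro x hx
    have hx2 : (0:ℝ) < 1 - x^2 := by nlinarith [hx.1, hx.2]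
    have hs : HasDerivAt (fun u : ℝ => Real.sqrt (1 - u^2)) (-x * (Real.sqrt (1 - x^2))⁻¹) x := by
      have h1 : HasDerivAt (fun u : ℝ => 1 - u^2) (-(2*x)) x := by
        simpa using ((hasDerivAt_pow 2 x).const_sub 1)
      have := (Real.hasDerivAt_sqrt (ne_of_gt hx2)).comp x h1
      exact this.congr_deriv (by ring)
    have he : HasDerivAt (fun u : ℝ => Real.exp (c * u)) (c * Real.exp (c * x)) x := by
      have h1 : HasDerivAt (fun u : ℝ => c * u) c x := by
        simpa using (hasDerivAt_id x).const_mul c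
      exact ((Real.hasDerivAt_exp (c*x)).comp x h1).congr_deriv (by ring)
    have h3 := ((hs.mul he).neg).hasDerivWithinAt (s := Set.Ioi x)
    convert h3 using 1
    · rfl
    · ring


noncomputable def fw (u : ℝ) : ℝ := (Real.sqrt (1 - u^2))⁻¹ / 2 - Real.sqrt (1 - u^2)

theorem fwInt {φ : ℝ → ℝ} (hφ : Continuous φ) (a b : ℝ) (hab : Set.uIcc a b ⊆ Set.uIcc (-1:ℝ) 1) :
    IntervalIntegrable (fun u : ℝ => fw u * φ u) volume a b := by
  have h1 := (wInt.mono_set hab).mul_continuousOn (g := fun u => φ u / 2) (Continuous.continuousOn (by continuity))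
  have h2 : IntervalIntegrable (fun u : ℝ => Real.sqrt (1 - u^2) * φ u) volume a b :=
    Continuous.intervalIntegrable (by continuity) _ _
  apply (h1.sub h2).congr
  intro u _
  simp [fw]; ring

theorem fwIntegral : ∫ u in (-1:ℝ)..1, fw u = 0 := by
  have h2 : IntervalIntegrable (fun u : ℝ => Real.sqrt (1 - u^2)) volume (-1) 1 :=
    Continuous.intervalIntegrable (by continuity) _ _
  have : ∫ u in (-1:ℝ)..1, fw u
      = (∫ u in (-1:ℝ)..1, (Real.sqrt (1 - u^2))⁻¹) / 2 - ∫ u in (-1:ℝ)..1, Real.sqrt (1 - u^2) := by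
    rw [← intervalIntegral.integral_div, ← intervalIntegral.integral_sub (wInt.div_const 2) h2]
    rfl
  rw [this, wIntegral, integral_sqrt_one_sub_sq]
  ring

-- sign of fw
theorem fw_nonneg {u : ℝ} (h : 1/2 ≤ u^2) : 0 ≤ fw u := by
  rcases le_or_gt 1 (u^2) with h1 | h1
  · have : Real.sqrt (1 - u^2) = 0 := Real.sqrt_eq_zero'.mpr (by linarith)
    simp [fw, this]
  · have ht : (0:ℝ) < 1 - u^2 := by linarith
    have hs : 0 < Real.sqrt (1 - u^2) := Real.sqrt_pos.mpr ht
    have hsq := Real.sq_sqrt ht.le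
    have hinv : Real.sqrt (1 - u^2) * (Real.sqrt (1 - u^2))⁻¹ = 1 := mul_inv_cancel₀ hs.ne'
    simp only [fw, sub_nonneg]
    nlinarith [hs, hsq, hinv]

theorem fw_nonpos {u : ℝ} (h : u^2 ≤ 1/2) : fw u ≤ 0 := by
  have ht : (0:ℝ) < 1 - u^2 := by linarith
  have hs : 0 < Real.sqrt (1 - u^2) := Real.sqrt_pos.mpr ht
  have hsq := Real.sq_sqrt ht.le
  have hinv : Real.sqrt (1 - u^2) * (Real.sqrt (1 - u^2))⁻¹ = 1 := mul_inv_cancel₀ hs.ne'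
  simp only [fw, sub_nonpos]
  nlinarith [hs, hsq, hinv]

theorem fw_neg {u : ℝ} (h : u^2 < 1/2) : fw u < 0 := by
  have ht : (0:ℝ) < 1 - u^2 := by linarith
  have hs : 0 < Real.sqrt (1 - u^2) := Real.sqrt_pos.mpr ht
  have hsq := Real.sq_sqrt ht.le
  have hinv : Real.sqrt (1 - u^2) * (Real.sqrt (1 - u^2))⁻¹ = 1 := mul_inv_cancel₀ hs.ne'
  simp only [fw, sub_neg]
  nlinarith [hs, hsq, hinv]

theorem abs_le_inv_sqrt2 {u : ℝ} (h : u^2 ≤ 1/2) : |u| ≤ (Real.sqrt 2)⁻¹ := by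
  have : |u| ≤ Real.sqrt (1/2) := Real.abs_le_sqrt (by simpa using h)
  simpa [one_div, Real.sqrt_inv] using this

theorem cosh_le_k {c u : ℝ} (hc : 0 ≤ c) (h : u^2 ≤ 1/2) :
    Real.cosh (c * u) ≤ Real.cosh (c * (Real.sqrt 2)⁻¹) := by
  rw [Real.cosh_le_cosh]
  rw [abs_mul, abs_mul, abs_of_nonneg hc, abs_of_nonneg (by positivity : (0:ℝ) ≤ (Real.sqrt 2)⁻¹)]
  exact mul_le_mul_of_nonneg_left (abs_le_inv_sqrt2 h) hc

theorem k_le_cosh {c u : ℝ} (hc : 0 ≤ c) (h : 1/2 ≤ u^2) :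
    Real.cosh (c * (Real.sqrt 2)⁻¹) ≤ Real.cosh (c * u) := by
  rw [Real.cosh_le_cosh]
  rw [abs_mul, abs_mul, abs_of_nonneg hc, abs_of_nonneg (by positivity : (0:ℝ) ≤ (Real.sqrt 2)⁻¹)]
  apply mul_le_mul_of_nonneg_left _ hc
  have h2 : (Real.sqrt 2)⁻¹ = Real.sqrt (1/2) := by simp [one_div, Real.sqrt_inv]
  rw [h2]
  exact Real.sqrt_le_sqrt (by simpa [sq_abs] using h) |>.trans_eq (Real.sqrt_sq (abs_nonneg u))

theorem cosh_lt_k {c u : ℝ} (hc : 0 < c) (h0 : 0 ≤ u) (h : u^2 < 1/2) :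
    Real.cosh (c * u) < Real.cosh (c * (Real.sqrt 2)⁻¹) := by
  rw [Real.cosh_lt_cosh]
  rw [abs_mul, abs_mul, abs_of_nonneg hc.le, abs_of_nonneg (by positivity : (0:ℝ) ≤ (Real.sqrt 2)⁻¹)]
  apply mul_lt_mul_of_pos_left _ hc
  rw [abs_of_nonneg h0]
  have hs : (0:ℝ) < Real.sqrt 2 := Real.sqrt_pos.mpr (by norm_num)
  have hsq := Real.sq_sqrt (by norm_num : (0:ℝ) ≤ 2)
  have hinv := mul_inv_cancel₀ hs.ne'
  nlinarith [hs, hsq, hinv, sq_nonneg (u - (Real.sqrt 2)⁻¹), sq_nonneg ((Real.sqrt 2)⁻¹), mul_pos hs hs]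

theorem keyPos {c : ℝ} (hc : 0 < c) :
    0 < ∫ u in (-1:ℝ)..1, fw u * Real.exp (c * u) := by
  set k := Real.cosh (c * (Real.sqrt 2)⁻¹) with hk
  set g : ℝ → ℝ := fun u => fw u * (Real.cosh (c * u) - k) with hg
  have hφ : Continuous (fun u : ℝ => Real.cosh (c * u) - k) :=
    (Real.continuous_cosh.comp (continuous_const.mul continuous_id)).sub continuous_const
  have hcont : Continuous (fun u : ℝ => Real.cosh (c * u)) :=
    Real.continuous_cosh.comp (continuous_const.mul continuous_id)
  -- g is nonneg everywhere
  have hgnonneg : ∀ u : ℝ, 0 ≤ g u := by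
    intro u
    rcases le_or_gt (u^2) (1/2) with h | h
    · have h2 : (0:ℝ) ≤ (-fw u) * (-(Real.cosh (c*u) - k)) :=
        mul_nonneg (neg_nonneg.mpr (fw_nonpos h))
          (neg_nonneg.mpr (sub_nonpos.mpr (cosh_le_k hc.le h)))
      simp only [hg]
      nlinarith [h2]
    · exact mul_nonneg (fw_nonneg h.le) (by linarith [k_le_cosh hc.le h.le])
  have hgpos : ∀ u ∈ Ioo (0:ℝ) (1/2), 0 < g u := by
    intro u hu
    have h2 : u^2 < 1/2 := by nlinarith [hu.1, hu.2]
    exact mul_pos_of_neg_of_neg (fw_neg h2) (by linarith [cosh_lt_k hc hu.1.le h2])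
  -- integral of g is positive
  have hsub1 : Set.uIcc (-1:ℝ) 0 ⊆ Set.uIcc (-1:ℝ) 1 := by
    rw [Set.uIcc_of_le (by norm_num : (-1:ℝ) ≤ 0), Set.uIcc_of_le (by norm_num : (-1:ℝ) ≤ 1)]
    exact Set.Icc_subset_Icc le_rfl (by norm_num)
  have hsub2 : Set.uIcc (0:ℝ) (1/2) ⊆ Set.uIcc (-1:ℝ) 1 := by
    rw [Set.uIcc_of_le (by norm_num : (0:ℝ) ≤ 1/2), Set.uIcc_of_le (by norm_num : (-1:ℝ) ≤ 1)]
    exact Set.Icc_subset_Icc (by norm_num) (by norm_num)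
  have hsub3 : Set.uIcc (1/2:ℝ) 1 ⊆ Set.uIcc (-1:ℝ) 1 := by
    rw [Set.uIcc_of_le (by norm_num : (1/2:ℝ) ≤ 1), Set.uIcc_of_le (by norm_num : (-1:ℝ) ≤ 1)]
    exact Set.Icc_subset_Icc (by norm_num) le_rfl
  have hi1 := fwInt hφ (-1) 0 hsub1
  have hi2 := fwInt hφ 0 (1/2) hsub2
  have hi3 := fwInt hφ (1/2) 1 hsub3
  have hsplit : ∫ u in (-1:ℝ)..1, g u
      = (∫ u in (-1:ℝ)..0, g u) + ((∫ u in (0:ℝ)..(1/2), g u) + ∫ u in (1/2:ℝ)..1, g u) := by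
    rw [intervalIntegral.integral_add_adjacent_intervals hi2 hi3,
      intervalIntegral.integral_add_adjacent_intervals hi1 (hi2.trans hi3)]
  have hgIntPos : 0 < ∫ u in (-1:ℝ)..1, g u := by
    rw [hsplit]
    have p1 : 0 ≤ ∫ u in (-1:ℝ)..0, g u :=
      intervalIntegral.integral_nonneg (by norm_num) (fun u _ => hgnonneg u)
    have p3 : 0 ≤ ∫ u in (1/2:ℝ)..1, g u :=
      intervalIntegral.integral_nonneg (by norm_num) (fun u _ => hgnonneg u)
    have p2 : 0 < ∫ u in (0:ℝ)..(1/2), g u :=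
      intervalIntegral_pos_of_pos_on hi2 hgpos (by norm_num)
    linarith
  -- now relate to the exponential integral
  have hE : IntervalIntegrable (fun u : ℝ => fw u * Real.exp (c * u)) volume (-1) 1 :=
    fwInt (by continuity) _ _ (subset_refl _)
  have hE' : IntervalIntegrable (fun u : ℝ => fw u * Real.exp (-c * u)) volume (-1) 1 :=
    fwInt (by continuity) _ _ (subset_refl _)
  have hsym : (∫ u in (-1:ℝ)..1, fw u * Real.exp (-c * u))
      = ∫ u in (-1:ℝ)..1, fw u * Real.exp (c * u) := by
    have h := intervalIntegral.integral_comp_neg (a := (-1:ℝ)) (b := 1)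
      (fun u => fw u * Real.exp (-c * u))
    norm_num at h
    simp only [neg_mul] at h ⊢
    simp only [fw, neg_sq] at h ⊢
    exact h.symm
  have hcoshInt : (∫ u in (-1:ℝ)..1, fw u * Real.cosh (c * u))
      = ∫ u in (-1:ℝ)..1, fw u * Real.exp (c * u) := by
    have : (∫ u in (-1:ℝ)..1, fw u * Real.cosh (c * u))
        = ∫ u in (-1:ℝ)..1, (fw u * Real.exp (c * u) + fw u * Real.exp (-c * u)) / 2 := by
      apply intervalIntegral.integral_congr
      intro u _
      simp only [Real.cosh_eq]
      ring
    rw [this, intervalIntegral.integral_div, intervalIntegral.integral_add hE hE', hsym]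
    ring
  have hfwI : IntervalIntegrable fw volume (-1) 1 := by
    have := fwInt (continuous_const : Continuous (fun _ : ℝ => (1:ℝ))) (-1) 1 (subset_refl _)
    simpa using this
  have hcI : IntervalIntegrable (fun u : ℝ => fw u * Real.cosh (c * u)) volume (-1) 1 :=
    fwInt hcont _ _ (subset_refl _)
  have hgeq : (∫ u in (-1:ℝ)..1, g u)
      = (∫ u in (-1:ℝ)..1, fw u * Real.cosh (c * u)) - ∫ u in (-1:ℝ)..1, k * fw u := by
    rw [← intervalIntegral.integral_sub hcI (hfwI.const_mul k)]
    apply intervalIntegral.integral_congr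
    intro u _
    simp only [hg]
    ring
  rw [intervalIntegral.integral_const_mul] at hgeq
  rw [hgeq, fwIntegral, hcoshInt] at hgIntPos
  linarith



theorem num_eq (β ρ : ℝ) :
    (∫ u in (-1:ℝ)..1, u * (1 - u ^ 2) ^ (-(1:ℝ)/2) * Real.exp (β * u * ρ))
      = ∫ u in (-1:ℝ)..1, u * (Real.sqrt (1 - u^2))⁻¹ * Real.exp ((β * ρ) * u) := by
  apply intervalIntegral.integral_congr
  intro u hu
  rw [Set.uIcc_of_le (by norm_num : (-1:ℝ) ≤ 1)] at hu
  have h : (0:ℝ) ≤ 1 - u^2 := by nlinarith [hu.1, hu.2]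
  show u * (1 - u ^ 2) ^ (-(1:ℝ)/2) * Real.exp (β * u * ρ)
      = u * (Real.sqrt (1 - u^2))⁻¹ * Real.exp ((β * ρ) * u)
  rw [show (1 - u^2 : ℝ) ^ (-(1:ℝ)/2) = (Real.sqrt (1 - u^2))⁻¹ by
    rw [show -(1:ℝ)/2 = -(1/2) by ring, Real.rpow_neg h, ← Real.sqrt_eq_rpow],
    show β * u * ρ = (β * ρ) * u by ring]

theorem den_eq (β ρ : ℝ) :
    (∫ u in (-1:ℝ)..1, (1 - u ^ 2) ^ (-(1:ℝ)/2) * Real.exp (β * u * ρ))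
      = ∫ u in (-1:ℝ)..1, (Real.sqrt (1 - u^2))⁻¹ * Real.exp ((β * ρ) * u) := by
  apply intervalIntegral.integral_congr
  intro u hu
  rw [Set.uIcc_of_le (by norm_num : (-1:ℝ) ≤ 1)] at hu
  have h : (0:ℝ) ≤ 1 - u^2 := by nlinarith [hu.1, hu.2]
  show (1 - u ^ 2) ^ (-(1:ℝ)/2) * Real.exp (β * u * ρ)
      = (Real.sqrt (1 - u^2))⁻¹ * Real.exp ((β * ρ) * u)
  rw [show (1 - u^2 : ℝ) ^ (-(1:ℝ)/2) = (Real.sqrt (1 - u^2))⁻¹ by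
    rw [show -(1:ℝ)/2 = -(1/2) by ring, Real.rpow_neg h, ← Real.sqrt_eq_rpow],
    show β * u * ρ = (β * ρ) * u by ring]

theorem den_pos (c : ℝ) :
    0 < ∫ u in (-1:ℝ)..1, (Real.sqrt (1 - u^2))⁻¹ * Real.exp (c * u) := by
  apply intervalIntegral_pos_of_pos_on (wExpInt c) _ (by norm_num)
  intro u hu
  have h : (0:ℝ) < 1 - u^2 := by nlinarith [hu.1, hu.2]
  positivity

theorem num_odd (c : ℝ) :
    (∫ u in (-1:ℝ)..1, u * (Real.sqrt (1 - u^2))⁻¹ * Real.exp ((-c) * u))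
      = -∫ u in (-1:ℝ)..1, u * (Real.sqrt (1 - u^2))⁻¹ * Real.exp (c * u) := by
  have h := intervalIntegral.integral_comp_neg (a := (-1:ℝ)) (b := 1)
    (fun u => u * (Real.sqrt (1 - u^2))⁻¹ * Real.exp ((-c) * u))
  norm_num at h
  simp only [neg_mul] at h ⊢
  exact h.symm

theorem den_even (c : ℝ) :
    (∫ u in (-1:ℝ)..1, (Real.sqrt (1 - u^2))⁻¹ * Real.exp ((-c) * u))
      = ∫ u in (-1:ℝ)..1, (Real.sqrt (1 - u^2))⁻¹ * Real.exp (c * u) := by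
  have h := intervalIntegral.integral_comp_neg (a := (-1:ℝ)) (b := 1)
    (fun u => (Real.sqrt (1 - u^2))⁻¹ * Real.exp ((-c) * u))
  norm_num at h
  simp only [neg_mul] at h ⊢
  exact h.symm

theorem Rf_odd (β ρ : ℝ) : Rf β (-ρ) = - Rf β ρ := by
  unfold Rf
  rw [num_eq, den_eq, num_eq, den_eq,
    show β * -ρ = -(β * ρ) by ring, num_odd, den_even]
  rw [neg_div]

theorem Rf_lt (β : ℝ) (hβ : 0 < β) (hβ2 : β ≤ 2) (ρ : ℝ) (hρ : 0 < ρ) : Rf β ρ < ρ := by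
  set c := β * ρ with hc
  have hcpos : 0 < c := mul_pos hβ hρ
  unfold Rf
  rw [num_eq, den_eq]
  set D := ∫ u in (-1:ℝ)..1, (Real.sqrt (1 - u^2))⁻¹ * Real.exp (c * u) with hD
  set S := ∫ u in (-1:ℝ)..1, Real.sqrt (1 - u^2) * Real.exp (c * u) with hS
  have hDpos : 0 < D := den_pos c
  have hN : (∫ u in (-1:ℝ)..1, u * (Real.sqrt (1 - u^2))⁻¹ * Real.exp (c * u)) = c * S := parts c
  have hSnonneg : 0 ≤ S := by
    apply intervalIntegral.integral_nonneg (by norm_num)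
    intro u _
    positivity
  have hfw : (∫ u in (-1:ℝ)..1, fw u * Real.exp (c * u)) = D / 2 - S := by
    have h2 : IntervalIntegrable (fun u : ℝ => Real.sqrt (1 - u^2) * Real.exp (c * u)) volume (-1) 1 := by
      apply Continuous.intervalIntegrable
      exact ((Real.continuous_sqrt.comp (continuous_const.sub (continuous_pow 2))).mul
        (Real.continuous_exp.comp (continuous_const.mul continuous_id)))
    have : (∫ u in (-1:ℝ)..1, fw u * Real.exp (c * u))
        = (∫ u in (-1:ℝ)..1, ((Real.sqrt (1 - u^2))⁻¹ * Real.exp (c * u)) / 2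
            - Real.sqrt (1 - u^2) * Real.exp (c * u)) := by
      apply intervalIntegral.integral_congr
      intro u _
      simp only [fw]
      ring
    rw [this, intervalIntegral.integral_sub ((wExpInt c).div_const 2) h2,
      intervalIntegral.integral_div]
  have hkey := keyPos hcpos
  rw [hfw] at hkey
  -- ρ * D - c * S > 0
  have h1 : c * S ≤ 2 * ρ * S := by
    have : c ≤ 2 * ρ := by rw [hc]; nlinarith
    exact mul_le_mul_of_nonneg_right this hSnonneg
  have h2 : 2 * ρ * S < ρ * D := by nlinarith
  rw [hN, div_lt_iff₀ hDpos]
  nlinarith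


end XYaux

/-- If `β ≤ 2` then `ρ = 0` is the unique solution of the mean field equation `ρ = R(ρ)`. -/
theorem stmt2 (β : ℝ) (hβ : 0 < β) (hβ2 : β ≤ 2) :
    ∀ ρ : ℝ, ρ = Rf β ρ ↔ ρ = 0 := by
  intro ρ
  constructor
  · intro hfix
    by_contra hne
    rcases lt_or_gt_of_ne hne with hneg | hpos
    · have h1 : -ρ = Rf β (-ρ) := by rw [Rf_odd, ← hfix]
      have := Rf_lt β hβ hβ2 (-ρ) (by linarith)
      linarith [h1 ▸ this]
    · have := Rf_lt β hβ hβ2 ρ hpos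
      linarith [hfix ▸ this]
  · intro h
    subst h
    have h := Rf_odd β 0
    rw [neg_zero] at h
    linarith
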